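/- arXiv:2605.19502 — 2 statements merged into one kernel-verified Lean document; each statement's English description precedes it below -/
import Mathlib

section
/- Let X be a finite set of pairwise distinct elements of a field of characteristic ≠ 2 with |X| = 2h, and let A_X be the matrix indexed by X with zero diagonal and (x,y) entry 1/(x-y) for x ≠ y. Then per A_X = (-1)^h · Σ_{matchings m of X} Π_{{x,y} ∈ m} 1/(x-y)^2, where the sum is over perfect matchings of X. -/
open scoped Classical

/-- The permanent of a square matrix. -/
noncomputable def permanent {n : Type*} [Fintype n] {R : Type*} [CommRing R]
    (M : Matrix n n R) : R :=
  ∑ σ : Equiv.Perm n, ∏ i, M i (σ i)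

/-- `P` is a perfect matching of the finite set `X`: a set of non-loop unordered pairs with
endpoints in `X` such that each element of `X` lies in exactly one pair. -/
def IsPerfectMatching {K : Type*} (X : Finset K) (P : Finset (Sym2 K)) : Prop :=
  (∀ e ∈ P, ¬ e.IsDiag) ∧ ∀ a ∈ X, ∃! e, e ∈ P ∧ a ∈ e

open Finset Equiv

theorem Equiv.Perm.inv_apply_self {α : Type*} (f : Equiv.Perm α) (x : α) : f⁻¹ (f x) = x :=
  f.symm_apply_apply x

theorem Equiv.Perm.apply_inv_self {α : Type*} (f : Equiv.Perm α) (x : α) : f (f⁻¹ x) = x :=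
  f.apply_symm_apply x

set_option linter.unusedSectionVars false
namespace Stmt10

variable {ι : Type*} [Fintype ι] [DecidableEq ι]

/-- the set of elements in cycles of length ≥ 3 (given fixed-point-freeness) -/
noncomputable def nfix (σ : Perm ι) : Finset ι := univ.filter fun x => σ (σ x) ≠ x

section LO
variable [LinearOrder ι]

noncomputable def Fmap (σ : Perm ι) : Option (ι × Perm ι) :=
  if h : (nfix σ).Nonempty then
    some ((nfix σ).max' h, σ * Equiv.swap ((nfix σ).max' h) (σ⁻¹ ((nfix σ).max' h)))
  else none

noncomputable def Uset (z : ι) (σ' : Perm ι) : Finset ι :=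
  univ.filter fun t => t ≠ z ∧ ∀ x, σ'.SameCycle t x → x < z

/-- an element of a 2-cycle is not in the cycle of an element of a long cycle -/
lemma lemC (σ : Perm ι) {z x : ι} (hz : σ (σ z) ≠ z)
    (hsc : σ.SameCycle z x) (hxz : x ≠ z) (hxx : σ (σ x) = x) : False := by
  have h2 : (σ ^ (2:ℤ)) x = x := by
    rw [show (2:ℤ) = 1 + 1 by ring, zpow_add, zpow_one, Perm.mul_apply, hxx]
  have key : ∀ j : ℤ, (σ ^ j) x = x ∨ (σ ^ j) x = σ x := by
    intro j
    have hj : j = 2 * (j / 2) + j % 2 := (Int.mul_ediv_add_emod j 2).symm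
    have hv : (σ ^ (2 * (j / 2))) x = x := by
      rw [zpow_mul]
      exact Equiv.Perm.zpow_apply_eq_self_of_apply_eq_self h2 _
    have : (σ ^ j) x = (σ ^ (j % 2)) x := by
      conv_lhs => rw [hj]
      rw [add_comm, zpow_add, Perm.mul_apply, hv]
    rw [this]
    rcases Int.emod_two_eq j with h | h <;> rw [h]
    · left; simp
    · right; simp
  obtain ⟨i, hi⟩ := hsc
  have hzx : (σ ^ (-i)) x = z := by
    rw [← hi, zpow_neg]
    exact Equiv.Perm.inv_apply_self _ _
  rcases key (-i) with h | h
  · exact hxz (hzx ▸ h).symm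
  · have hz' : z = σ x := hzx ▸ h
    apply hz
    rw [hz', hxx]


section Analysis
variable {σ : Perm ι} {z : ι}

/-- facts about splicing out `z` from a bad permutation -/
lemma L1 (hfpf : ∀ x, σ x ≠ x) (hz1 : σ (σ z) ≠ z) (hz2 : ∀ x, σ (σ x) ≠ x → x ≤ z) :
    (σ * Equiv.swap z (σ⁻¹ z)) z = z ∧
    (∀ x, x ≠ z → (σ * Equiv.swap z (σ⁻¹ z)) x ≠ x) ∧
    (∀ x, (σ * Equiv.swap z (σ⁻¹ z)) ((σ * Equiv.swap z (σ⁻¹ z)) x) ≠ x → x < z) ∧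
    σ⁻¹ z ∈ Uset z (σ * Equiv.swap z (σ⁻¹ z)) := by
  set w := σ⁻¹ z with hw
  set σ' := σ * Equiv.swap z w with hσ'
  have hσw : σ w = z := Equiv.Perm.apply_inv_self σ z
  have hwz : w ≠ z := by
    intro h; exact hfpf z (h ▸ hσw)
  have hσz_ne_w : σ z ≠ w := by
    intro h; apply hz1; rw [h, hσw]
  have apσ' : ∀ x, x ≠ z → x ≠ w → σ' x = σ x := by
    intro x h1 h2
    rw [hσ', Perm.mul_apply, Equiv.swap_apply_of_ne_of_ne h1 h2]
  have f1 : σ' z = z := by rw [hσ', Perm.mul_apply, Equiv.swap_apply_left, hσw]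
  have hσ'w : σ' w = σ z := by rw [hσ', Perm.mul_apply, Equiv.swap_apply_right]
  have f2 : ∀ x, x ≠ z → σ' x ≠ x := by
    intro x hx
    by_cases hxw : x = w
    · rw [hxw, hσ'w]; intro h; exact hσz_ne_w h
    · rw [apσ' x hx hxw]; exact hfpf x
  have f3 : ∀ x, σ' (σ' x) ≠ x → x < z := by
    intro x hx
    have hxz : x ≠ z := by intro h; apply hx; rw [h, f1, f1]
    have hxx : σ (σ x) ≠ x := by
      intro hxx
      have hxw : x ≠ w := by
        intro h
        rw [h, hσw] at hxx
        exact hσz_ne_w hxx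
      have h1 : σ x ≠ z := by
        intro h; apply hxw; rw [hw, ← h, Equiv.Perm.inv_apply_self]
      have h2 : σ x ≠ w := by
        intro h; apply hxz; rw [← hxx, h, hσw]
      apply hx
      rw [apσ' x hxz hxw, apσ' (σ x) h1 h2, hxx]
    exact lt_of_le_of_ne (hz2 x hxx) hxz
  refine ⟨f1, f2, f3, ?_⟩
  -- w ∈ Uset z σ'
  have fixpow : ∀ n : ℕ, (σ' ^ n) z = z := fun n =>
    Equiv.Perm.pow_apply_eq_self_of_apply_eq_self f1 n
  have Q : ∀ n : ℕ, (σ' ^ n) w ≠ z ∧ σ.SameCycle z ((σ' ^ n) w) := by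
    intro n
    induction n with
    | zero =>
      refine ⟨by simpa using hwz, ?_⟩
      simp only [pow_zero, Perm.one_apply]
      exact (Equiv.Perm.SameCycle.symm ⟨1, by simp [hσw]⟩)
    | succ n ih =>
      obtain ⟨hne, hsc⟩ := ih
      set y := (σ' ^ n) w with hy
      have hstep : (σ' ^ (n + 1)) w = σ' y := by rw [pow_succ', Perm.mul_apply]
      by_cases hyw : y = w
      · rw [hstep, hyw, hσ'w]
        exact ⟨hfpf z, ⟨1, by simp⟩⟩
      · have hyσ : σ' y = σ y := apσ' y hne hyw
        rw [hstep, hyσ]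
        constructor
        · intro hc; apply hyw; rw [hw, ← hc, Equiv.Perm.inv_apply_self]
        · exact hsc.trans ⟨1, by simp⟩
  simp only [Uset, mem_filter, mem_univ, true_and]
  refine ⟨hwz, ?_⟩
  intro x hsc
  obtain ⟨n, _, hn⟩ := hsc.exists_pow_eq'
  obtain ⟨hne, hzx⟩ := Q n
  rw [hn] at hne hzx
  have hx2 : σ (σ x) ≠ x := by
    intro hxx; exact lemC σ hz1 hzx hne hxx
  exact lt_of_le_of_ne (hz2 x hx2) hne


/-- inserting `z` at a valid position gives a bad permutation mapping back -/
lemma L2 {σ' : Perm ι} (f1 : σ' z = z) (f2 : ∀ x, x ≠ z → σ' x ≠ x)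
    (f3 : ∀ x, σ' (σ' x) ≠ x → x < z) {t : ι} (ht : t ∈ Uset z σ') :
    (∀ x, (σ' * Equiv.swap z t) x ≠ x) ∧ Fmap (σ' * Equiv.swap z t) = some (z, σ') := by
  simp only [Uset, mem_filter, mem_univ, true_and] at ht
  obtain ⟨htz, hU⟩ := ht
  set σ := σ' * Equiv.swap z t with hσ
  have hσz : σ z = σ' t := by rw [hσ, Perm.mul_apply, Equiv.swap_apply_left]
  have hσt : σ t = z := by rw [hσ, Perm.mul_apply, Equiv.swap_apply_right, f1]
  have apσ : ∀ x, x ≠ z → x ≠ t → σ x = σ' x := by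
    intro x h1 h2; rw [hσ, Perm.mul_apply, Equiv.swap_apply_of_ne_of_ne h1 h2]
  have hσ't_ne_z : σ' t ≠ z := fun hc => htz (σ'.injective (by rw [hc, f1]))
  have hσ't_ne_t : σ' t ≠ t := f2 t htz
  have hfpf : ∀ x, σ x ≠ x := by
    intro x
    by_cases h1 : x = z
    · rw [h1, hσz]; exact hσ't_ne_z
    · by_cases h2 : x = t
      · rw [h2, hσt]; exact fun hc => htz hc.symm
      · rw [apσ x h1 h2]; exact f2 x h1
  have hPz : σ (σ z) ≠ z := by
    rw [hσz, apσ _ hσ't_ne_z hσ't_ne_t]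
    intro hc
    exact htz (σ'.injective (σ'.injective (by rw [hc, f1, f1])))
  have hzm : z ∈ nfix σ := by simp [nfix, hPz]
  have hne : (nfix σ).Nonempty := ⟨z, hzm⟩
  have hmax : ∀ x, σ (σ x) ≠ x → x ≤ z := by
    intro x hx
    by_cases hsc : σ'.SameCycle t x
    · exact le_of_lt (hU x hsc)
    · by_cases h1 : x = z
      · exact le_of_eq h1
      have h2 : x ≠ t := fun hc => hsc (hc ▸ Equiv.Perm.SameCycle.refl σ' t)
      have h3 : σ' x ≠ z := fun hc => h1 (σ'.injective (by rw [hc, f1]))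
      have h4 : σ' x ≠ t := by
        intro hc
        exact hsc (Equiv.Perm.SameCycle.symm ⟨1, by simp [hc]⟩)
      have : σ (σ x) = σ' (σ' x) := by rw [apσ x h1 h2, apσ _ h3 h4]
      rw [this] at hx
      exact le_of_lt (f3 x hx)
  have hmaxeq : (nfix σ).max' hne = z := by
    apply le_antisymm
    · apply Finset.max'_le
      intro y hy
      simp only [nfix, mem_filter, mem_univ, true_and] at hy
      exact hmax y hy
    · exact Finset.le_max' _ z hzm
  have hinv : σ⁻¹ z = t := by rw [← hσt, Equiv.Perm.inv_apply_self]
  refine ⟨hfpf, ?_⟩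
  rw [Fmap, dif_pos hne]
  congr 1
  rw [hmaxeq, hinv]
  ext p
  · rfl
  · simp only [hσ]
    rw [mul_assoc, Equiv.swap_mul_self, mul_one]

end Analysis

section FieldPart
variable {K : Type*} [Field K]

noncomputable def Am (g : ι → K) : ι → ι → K := fun x y => if x = y then 0 else (g x - g y)⁻¹

lemma Uset_invariant {z : ι} {σ' : Perm ι} (f1 : σ' z = z) (t : ι) :
    σ' t ∈ Uset z σ' ↔ t ∈ Uset z σ' := by
  simp only [Uset, mem_filter, mem_univ, true_and]
  constructor
  · rintro ⟨h1, h2⟩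
    exact ⟨fun hc => h1 (by rw [hc, f1]), fun x hx => h2 x ((Equiv.Perm.sameCycle_apply_left).mpr hx)⟩
  · rintro ⟨h1, h2⟩
    exact ⟨fun hc => h1 (σ'.injective (by rw [hc, f1])),
      fun x hx => h2 x ((Equiv.Perm.sameCycle_apply_left).mp hx)⟩

lemma fiber_sum_zero (g : ι → K) (hg : Function.Injective g) {z : ι} {σ' : Perm ι}
    (f1 : σ' z = z) (f2 : ∀ x, x ≠ z → σ' x ≠ x) :
    ∑ t ∈ Uset z σ', ∏ x, Am g x ((σ' * Equiv.swap z t) x) = 0 := by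
  have key : ∀ t ∈ Uset z σ',
      ∏ x, Am g x ((σ' * Equiv.swap z t) x)
        = (∏ x ∈ univ.erase z, Am g x (σ' x)) *
            ((g z - g (σ' t))⁻¹ + (g t - g z)⁻¹) := by
    intro t ht
    simp only [Uset, mem_filter, mem_univ, true_and] at ht
    obtain ⟨htz, hU⟩ := ht
    set σ := σ' * Equiv.swap z t with hσ
    have hσz : σ z = σ' t := by rw [hσ, Perm.mul_apply, Equiv.swap_apply_left]
    have hσt : σ t = z := by rw [hσ, Perm.mul_apply, Equiv.swap_apply_right, f1]
    have apσ : ∀ x, x ≠ z → x ≠ t → σ x = σ' x := by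
      intro x h1 h2; rw [hσ, Perm.mul_apply, Equiv.swap_apply_of_ne_of_ne h1 h2]
    have hσ't_ne_z : σ' t ≠ z := fun hc => htz (σ'.injective (by rw [hc, f1]))
    have hσ't_ne_t : σ' t ≠ t := f2 t htz
    have hzU : z ∈ (univ : Finset ι) := mem_univ z
    have htU' : t ∈ univ.erase z := by simp [htz]
    -- LHS split
    have e1 : ∏ x, Am g x (σ x)
        = Am g t (σ t) * ∏ x ∈ univ.erase t, Am g x (σ x) :=
      (Finset.mul_prod_erase univ _ (mem_univ t)).symm
    have e2 : ∏ x ∈ univ.erase t, Am g x (σ x)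
        = Am g z (σ z) * ∏ x ∈ (univ.erase t).erase z, Am g x (σ x) :=
      (Finset.mul_prod_erase _ _ (by simp [Ne.symm htz])).symm
    have e3 : ∏ x ∈ (univ.erase t).erase z, Am g x (σ x)
        = ∏ x ∈ (univ.erase t).erase z, Am g x (σ' x) := by
      apply Finset.prod_congr rfl
      intro x hx
      simp only [mem_erase] at hx
      rw [apσ x hx.1 hx.2.1]
    -- RHS split
    have e4 : ∏ x ∈ univ.erase z, Am g x (σ' x)
        = Am g t (σ' t) * ∏ x ∈ (univ.erase z).erase t, Am g x (σ' x) :=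
      (Finset.mul_prod_erase _ _ htU').symm
    have eset : (univ.erase t).erase z = (univ.erase z).erase t := Finset.erase_right_comm
    rw [e1, e2, e3, eset, e4, hσz, hσt]
    have ha : g t - g z ≠ 0 := sub_ne_zero.mpr (fun hc => htz (hg hc))
    have hb : g z - g (σ' t) ≠ 0 := sub_ne_zero.mpr (fun hc => hσ't_ne_z (hg hc).symm)
    have hc : g t - g (σ' t) ≠ 0 := sub_ne_zero.mpr (fun hc => hσ't_ne_t (hg hc).symm)
    have hAm1 : Am g t z = (g t - g z)⁻¹ := if_neg htz
    have hAm2 : Am g z (σ' t) = (g z - g (σ' t))⁻¹ := if_neg (Ne.symm hσ't_ne_z)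
    have hAm3 : Am g t (σ' t) = (g t - g (σ' t))⁻¹ := if_neg (Ne.symm hσ't_ne_t)
    rw [hAm1, hAm2, hAm3]
    ring_nf
    rw [show (g t - g z)⁻¹ * (g z - g (σ' t))⁻¹
        = (g t - g (σ' t))⁻¹ * ((g z - g (σ' t))⁻¹ + (g t - g z)⁻¹) by
      field_simp
      ring]
    ring
  rw [Finset.sum_congr rfl key, ← Finset.mul_sum]
  have split : ∑ t ∈ Uset z σ', ((g z - g (σ' t))⁻¹ + (g t - g z)⁻¹) = 0 := by
    rw [Finset.sum_add_distrib]
    have r1 : ∑ t ∈ Uset z σ', (g z - g (σ' t))⁻¹ = ∑ t ∈ Uset z σ', (g z - g t)⁻¹ := by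
      apply Finset.sum_nbij' (i := fun t => σ' t) (j := fun t => σ'⁻¹ t)
      · intro a ha; exact (Uset_invariant f1 a).mpr ha
      · intro a ha
        have : σ' (σ'⁻¹ a) ∈ Uset z σ' := by rw [Equiv.Perm.apply_inv_self]; exact ha
        exact (Uset_invariant f1 _).mp this
      · intro a _; exact Equiv.Perm.inv_apply_self σ' a
      · intro a _; exact Equiv.Perm.apply_inv_self σ' a
      · intro a _; rfl
    rw [r1]
    have r2 : ∀ t ∈ Uset z σ', (g t - g z)⁻¹ = -(g z - g t)⁻¹ := by
      intro t _; rw [← inv_neg, neg_sub]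
    rw [Finset.sum_congr rfl r2, Finset.sum_neg_distrib]
    ring
  rw [split, mul_zero]


lemma bad_sum_zero (g : ι → K) (hg : Function.Injective g) :
    ∑ σ ∈ univ.filter (fun σ : Perm ι => (∀ x, σ x ≠ x) ∧ ∃ x, σ (σ x) ≠ x),
      ∏ x, Am g x (σ x) = 0 := by
  set Bad := univ.filter (fun σ : Perm ι => (∀ x, σ x ≠ x) ∧ ∃ x, σ (σ x) ≠ x) with hBad
  rw [← Finset.sum_fiberwise_of_maps_to (g := Fmap) (t := Bad.image Fmap)
    (fun x hx => mem_image_of_mem _ hx)]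
  apply Finset.sum_eq_zero
  intro p hp
  obtain ⟨σ₀, hσ₀m, hFσ₀⟩ := mem_image.mp hp
  have hσ₀ := hσ₀m
  rw [hBad, mem_filter] at hσ₀
  obtain ⟨-, hfpf₀, hex₀⟩ := hσ₀
  have hne₀ : (nfix σ₀).Nonempty := by
    obtain ⟨x, hx⟩ := hex₀; exact ⟨x, by simp [nfix, hx]⟩
  set z := (nfix σ₀).max' hne₀ with hzdef
  set σ' := σ₀ * Equiv.swap z (σ₀⁻¹ z) with hσ'def
  have hp_eq : p = some (z, σ') := by rw [← hFσ₀, Fmap, dif_pos hne₀]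
  have hz1 : σ₀ (σ₀ z) ≠ z := by
    have := (nfix σ₀).max'_mem hne₀
    simp only [nfix, mem_filter, mem_univ, true_and] at this
    exact this
  have hz2 : ∀ x, σ₀ (σ₀ x) ≠ x → x ≤ z :=
    fun x hx => Finset.le_max' _ x (by simp [nfix, hx])
  obtain ⟨f1, f2, f3, hw₀⟩ := L1 hfpf₀ hz1 hz2
  rw [hp_eq]
  have main : ∑ σ ∈ Bad.filter (fun σ => Fmap σ = some (z, σ')), ∏ x, Am g x (σ x)
      = ∑ t ∈ Uset z σ', ∏ x, Am g x ((σ' * Equiv.swap z t) x) := by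
    apply Finset.sum_nbij' (i := fun σ => σ⁻¹ z) (j := fun t => σ' * Equiv.swap z t)
    · -- maps to
      intro σ hσ
      simp only [mem_filter] at hσ
      obtain ⟨hσb, hFσ⟩ := hσ
      rw [hBad, mem_filter] at hσb
      obtain ⟨-, hfpf, hex⟩ := hσb
      have hne : (nfix σ).Nonempty := by
        obtain ⟨x, hx⟩ := hex; exact ⟨x, by simp [nfix, hx]⟩
      rw [Fmap, dif_pos hne] at hFσ
      have hinj := Option.some_injective _ hFσ
      have hz_eq : (nfix σ).max' hne = z := congrArg Prod.fst hinj
      have hσ'_eq : σ * Equiv.swap ((nfix σ).max' hne) (σ⁻¹ ((nfix σ).max' hne)) = σ' :=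
        congrArg Prod.snd hinj
      have hz1' : σ (σ ((nfix σ).max' hne)) ≠ (nfix σ).max' hne := by
        have := (nfix σ).max'_mem hne
        simp only [nfix, mem_filter, mem_univ, true_and] at this
        exact this
      have hz2' : ∀ x, σ (σ x) ≠ x → x ≤ (nfix σ).max' hne :=
        fun x hx => Finset.le_max' _ x (by simp [nfix, hx])
      obtain ⟨-, -, -, hw⟩ := L1 hfpf hz1' hz2'
      rw [hz_eq] at hσ'_eq hw
      rw [hσ'_eq] at hw
      exact hw
    · -- j maps to
      intro t ht
      obtain ⟨hfpf', hF'⟩ := L2 f1 f2 f3 ht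
      simp only [mem_filter]
      refine ⟨?_, hF'⟩
      rw [hBad, mem_filter]
      have hne' : (nfix (σ' * Equiv.swap z t)).Nonempty := by
        by_contra hcon
        rw [Fmap, dif_neg hcon] at hF'
        cases hF'
      obtain ⟨x, hx⟩ := hne'
      simp only [nfix, mem_filter, mem_univ, true_and] at hx
      exact ⟨mem_univ _, hfpf', ⟨x, hx⟩⟩
    · -- left inverse
      intro σ hσ
      simp only [mem_filter] at hσ
      obtain ⟨hσb, hFσ⟩ := hσ
      have hne : (nfix σ).Nonempty := by
        by_contra hcon
        rw [Fmap, dif_neg hcon] at hFσ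
        cases hFσ
      rw [Fmap, dif_pos hne] at hFσ
      have hinj := Option.some_injective _ hFσ
      have hz_eq : (nfix σ).max' hne = z := congrArg Prod.fst hinj
      have hσ'_eq : σ * Equiv.swap ((nfix σ).max' hne) (σ⁻¹ ((nfix σ).max' hne)) = σ' :=
        congrArg Prod.snd hinj
      rw [hz_eq] at hσ'_eq
      rw [← hσ'_eq, mul_assoc, Equiv.swap_mul_self, mul_one]
    · -- right inverse
      intro t ht
      simp only [Uset, mem_filter, mem_univ, true_and] at ht
      have h5 : (σ' * Equiv.swap z t) t = z := by
        rw [Perm.mul_apply, Equiv.swap_apply_right, f1]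
      exact Equiv.Perm.inv_eq_iff_eq.mpr h5.symm
    · -- values
      intro σ hσ
      simp only [mem_filter] at hσ
      obtain ⟨hσb, hFσ⟩ := hσ
      have hne : (nfix σ).Nonempty := by
        by_contra hcon
        rw [Fmap, dif_neg hcon] at hFσ
        cases hFσ
      rw [Fmap, dif_pos hne] at hFσ
      have hinj := Option.some_injective _ hFσ
      have hz_eq : (nfix σ).max' hne = z := congrArg Prod.fst hinj
      have hσ'_eq : σ * Equiv.swap ((nfix σ).max' hne) (σ⁻¹ ((nfix σ).max' hne)) = σ' :=
        congrArg Prod.snd hinj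
      rw [hz_eq] at hσ'_eq
      have : σ' * Equiv.swap z (σ⁻¹ z) = σ := by
        rw [← hσ'_eq, mul_assoc, Equiv.swap_mul_self, mul_one]
      rw [this]
  rw [main]
  exact fiber_sum_zero g hg f1 f2

/-- the main cancellation: only fixed-point-free involutions contribute -/
lemma sum_perm_eq (g : ι → K) (hg : Function.Injective g) :
    ∑ σ : Perm ι, ∏ x, Am g x (σ x)
      = ∑ σ ∈ univ.filter (fun σ : Perm ι => ∀ x, σ x ≠ x ∧ σ (σ x) = x),
          ∏ x, Am g x (σ x) := by
  classical
  rw [← Finset.sum_filter_add_sum_filter_not univ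
    (fun σ : Perm ι => ∀ x, σ x ≠ x ∧ σ (σ x) = x) (fun σ => ∏ x, Am g x (σ x))]
  have h2 : ∑ σ ∈ univ.filter (fun σ : Perm ι => ¬ ∀ x, σ x ≠ x ∧ σ (σ x) = x),
      ∏ x, Am g x (σ x) = 0 := by
    rw [← Finset.sum_filter_add_sum_filter_not
      (univ.filter (fun σ : Perm ι => ¬ ∀ x, σ x ≠ x ∧ σ (σ x) = x))
      (fun σ : Perm ι => ∀ x, σ x ≠ x) (fun σ => ∏ x, Am g x (σ x))]
    have hA : (univ.filter (fun σ : Perm ι => ¬ ∀ x, σ x ≠ x ∧ σ (σ x) = x)).filter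
        (fun σ : Perm ι => ∀ x, σ x ≠ x)
        = univ.filter (fun σ : Perm ι => (∀ x, σ x ≠ x) ∧ ∃ x, σ (σ x) ≠ x) := by
      rw [Finset.filter_filter]
      apply Finset.filter_congr
      intro σ _
      simp only [not_forall]
      constructor
      · rintro ⟨⟨x, hx⟩, hfpf⟩
        refine ⟨hfpf, x, ?_⟩
        by_cases h : σ (σ x) = x
        · exact absurd ⟨hfpf x, h⟩ hx
        · exact h
      · rintro ⟨hfpf, x, hx⟩
        exact ⟨⟨x, fun hc => hx hc.2⟩, hfpf⟩
    have hB : ∑ σ ∈ (univ.filter (fun σ : Perm ι => ¬ ∀ x, σ x ≠ x ∧ σ (σ x) = x)).filter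
        (fun σ : Perm ι => ¬ ∀ x, σ x ≠ x), ∏ x, Am g x (σ x) = 0 := by
      apply Finset.sum_eq_zero
      intro σ hσ
      simp only [mem_filter, not_forall, not_not] at hσ
      obtain ⟨-, x, hx⟩ := hσ
      exact Finset.prod_eq_zero (mem_univ x) (by simp [Am, hx])
    rw [hA, hB, bad_sum_zero g hg, add_zero]
  rw [h2, add_zero]

end FieldPart
end LO

section Matching
variable {K : Type*} [Field K] (X : Finset K)

noncomputable def sq2 (K : Type*) [Field K] : Sym2 K → K :=
  Sym2.lift ⟨fun a b => ((a - b) ^ 2)⁻¹,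
    fun a b => by simp only []; rw [show (a - b) ^ 2 = (b - a) ^ 2 by ring]⟩

noncomputable def Pm (σ : Perm {a // a ∈ X}) : Finset (Sym2 K) :=
  Finset.image (fun x : {a // a ∈ X} => s((x : K), ((σ x : {a // a ∈ X}) : K))) univ

lemma Pm_mem {σ : Perm {a // a ∈ X}} (hσ : ∀ x, σ x ≠ x ∧ σ (σ x) = x) :
    Pm X σ ∈ X.sym2.powerset.filter (fun P => IsPerfectMatching X P) := by
  simp only [mem_filter, mem_powerset]
  refine ⟨?_, ?_, ?_⟩
  · intro e he
    obtain ⟨a, -, rfl⟩ := mem_image.mp he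
    exact Finset.mk_mem_sym2_iff.mpr ⟨a.2, (σ a).2⟩
  · intro e he
    obtain ⟨a, -, rfl⟩ := mem_image.mp he
    rw [Sym2.mk_isDiag_iff]
    intro hc
    exact (hσ a).1 (Subtype.ext hc).symm
  · intro a ha
    set x : {a // a ∈ X} := ⟨a, ha⟩ with hx
    refine ⟨s((x : K), ((σ x : {a // a ∈ X}) : K)), ⟨mem_image_of_mem _ (mem_univ x), ?_⟩, ?_⟩
    · exact Sym2.mem_iff.mpr (Or.inl rfl)
    · rintro e ⟨he, hae⟩
      obtain ⟨y, -, rfl⟩ := mem_image.mp he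
      rcases Sym2.mem_iff.mp hae with h1 | h1
      · have : y = x := Subtype.ext h1.symm
        rw [this]
      · have hyx : σ y = x := Subtype.ext h1.symm
        have : y = σ x := by rw [← hyx, (hσ y).2]
        rw [this, (hσ x).2]
        exact Sym2.eq_swap

lemma Pm_inj {σ τ : Perm {a // a ∈ X}} (hσ : ∀ x, σ x ≠ x ∧ σ (σ x) = x)
    (hτ : ∀ x, τ x ≠ x ∧ τ (τ x) = x) (heq : Pm X σ = Pm X τ) : σ = τ := by
  ext x
  have hmem : s((x : K), ((σ x : {a // a ∈ X}) : K)) ∈ Pm X τ := by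
    rw [← heq]; exact mem_image_of_mem _ (mem_univ x)
  obtain ⟨y, -, hy⟩ := mem_image.mp hmem
  rcases Sym2.eq_iff.mp hy with ⟨h1, h2⟩ | ⟨h1, h2⟩
  · have hyx : y = x := Subtype.ext h1
    rw [hyx] at h2
    exact congrArg Subtype.val ((Subtype.ext h2).symm : σ x = τ x)
  · have hyσ : y = σ x := Subtype.ext h1
    have h3 : τ (σ x) = x := by rw [← hyσ]; exact Subtype.ext h2
    have h5 := congrArg τ h3
    rw [(hτ (σ x)).2] at h5
    exact congrArg Subtype.val h5

lemma Pm_surj {P : Finset (Sym2 K)}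
    (hP : P ∈ X.sym2.powerset.filter (fun P => IsPerfectMatching X P)) :
    ∃ σ : Perm {a // a ∈ X}, (∀ x, σ x ≠ x ∧ σ (σ x) = x) ∧ Pm X σ = P := by
  simp only [mem_filter, mem_powerset] at hP
  obtain ⟨hsub, hdiag, huniq⟩ := hP
  have hch : ∀ x : {a // a ∈ X}, ∃ e, e ∈ P ∧ (x : K) ∈ e := fun x =>
    ((huniq x x.2).exists)
  choose E hE hxE using hch
  have hother_mem : ∀ x : {a // a ∈ X}, (Sym2.Mem.other (hxE x)) ∈ X := fun x =>
    (Finset.mem_sym2_iff.mp (hsub (hE x))) _ (Sym2.other_mem (hxE x))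
  set f : {a // a ∈ X} → {a // a ∈ X} :=
    fun x => ⟨Sym2.Mem.other (hxE x), hother_mem x⟩ with hf
  have hne : ∀ x, f x ≠ x := by
    intro x hc
    exact Sym2.other_ne (hdiag _ (hE x)) (hxE x) (congrArg Subtype.val hc)
  have hEuniq : ∀ (a : K) (ha : a ∈ X) (e : Sym2 K), e ∈ P → a ∈ e →
      ∀ e', e' ∈ P → a ∈ e' → e = e' := by
    intro a ha e he hae e' he' hae'
    obtain ⟨e₀, -, hu⟩ := huniq a ha
    rw [hu e ⟨he, hae⟩, hu e' ⟨he', hae'⟩]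
  have hEf : ∀ x, E (f x) = E x := fun x =>
    hEuniq _ (f x).2 _ (hE (f x)) (hxE (f x)) _ (hE x) (Sym2.other_mem (hxE x))
  have hinv : Function.Involutive f := by
    intro x
    apply Subtype.ext
    have hspec : s((x : K), ((f x : {a // a ∈ X}) : K)) = E x := Sym2.other_spec (hxE x)
    have hm2 : (Sym2.Mem.other (hxE (f x))) ∈ E (f x) := Sym2.other_mem _
    have hm3 : (Sym2.Mem.other (hxE (f x))) ∈ s((x : K), ((f x : {a // a ∈ X}) : K)) := by
      rw [hspec, ← hEf x]; exact hm2
    rcases Sym2.mem_iff.mp hm3 with h | h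
    · exact h
    · exfalso
      exact Sym2.other_ne (hdiag _ (hE (f x))) (hxE (f x)) h
  refine ⟨hinv.toPerm, fun x => ⟨hne x, hinv x⟩, ?_⟩
  apply Finset.Subset.antisymm
  · intro e he
    obtain ⟨a, -, rfl⟩ := mem_image.mp he
    have : (hinv.toPerm : Perm {a // a ∈ X}) a = f a := rfl
    rw [this]
    have hspec : s((a : K), ((f a : {a // a ∈ X}) : K)) = E a := Sym2.other_spec (hxE a)
    rw [hspec]
    exact hE a
  · intro e he
    obtain ⟨a, b⟩ := e
    have haX : a ∈ X := (Finset.mem_sym2_iff.mp (hsub he)) a (Sym2.mem_iff.mpr (Or.inl rfl))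
    set x : {a // a ∈ X} := ⟨a, haX⟩ with hx
    have hEx : E x = s(a, b) := hEuniq a haX _ (hE x) (hxE x) _ he (Sym2.mem_iff.mpr (Or.inl rfl))
    have hspec : s((x : K), ((f x : {a // a ∈ X}) : K)) = E x := Sym2.other_spec (hxE x)
    show s(a, b) ∈ Pm X (Function.Involutive.toPerm f hinv)
    rw [← hEx, ← hspec]
    exact mem_image_of_mem _ (mem_univ x)

lemma value_eq {h : ℕ} (hX : X.card = 2 * h) {σ : Perm {a // a ∈ X}}
    (hσ : ∀ x, σ x ≠ x ∧ σ (σ x) = x) :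
    ∏ x, Am (fun x : {a // a ∈ X} => (x : K)) x (σ x)
      = (-1 : K) ^ h * ∏ e ∈ Pm X σ, sq2 K e := by
  classical
  set g : {a // a ∈ X} → K := fun x => (x : K) with hg
  set q : {a // a ∈ X} → Sym2 K := fun x => s((x : K), ((σ x : {a // a ∈ X}) : K)) with hq
  have hmaps : ∀ x ∈ (univ : Finset {a // a ∈ X}), q x ∈ Pm X σ :=
    fun x _ => mem_image_of_mem _ (mem_univ x)
  have fib : ∀ e ∈ Pm X σ, ∃ a : {a // a ∈ X},
      (univ.filter fun x => q x = e) = {a, σ a} ∧ e = q a := by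
    intro e he
    obtain ⟨a, -, rfl⟩ := mem_image.mp he
    refine ⟨a, ?_, rfl⟩
    ext y
    simp only [mem_filter, mem_univ, true_and, mem_insert, mem_singleton]
    constructor
    · intro hy
      rcases Sym2.eq_iff.mp hy with ⟨h1, h2⟩ | ⟨h1, h2⟩
      · exact Or.inl (Subtype.ext h1)
      · right
        have hyσ : σ y = a := Subtype.ext h2
        have := congrArg σ hyσ
        rw [(hσ y).2] at this
        rw [← this]
    · rintro (rfl | rfl)
      · rfl
      · show s(((σ a : {a // a ∈ X}) : K), ((σ (σ a) : {a // a ∈ X}) : K))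
            = s((a : K), ((σ a : {a // a ∈ X}) : K))
        rw [(hσ a).2]
        exact Sym2.eq_swap
  have hcard : (Pm X σ).card = h := by
    have hfib := Finset.card_eq_sum_card_fiberwise hmaps
    have : ∀ e ∈ Pm X σ, (univ.filter fun x => q x = e).card = 2 := by
      intro e he
      obtain ⟨a, hfe, -⟩ := fib e he
      rw [hfe, Finset.card_insert_of_notMem (by simp [Ne.symm (hσ a).1]), Finset.card_singleton]
    rw [Finset.sum_congr rfl this, Finset.sum_const, smul_eq_mul] at hfib
    have huc : (univ : Finset {a // a ∈ X}).card = 2 * h := by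
      rw [Finset.card_univ, Fintype.card_coe, hX]
    rw [huc, mul_comm] at hfib
    exact (Nat.eq_of_mul_eq_mul_right (by norm_num) hfib).symm
  have hsplit := Finset.prod_fiberwise_of_maps_to hmaps
    (fun x => Am g x (σ x))
  rw [← hsplit]
  have hval : ∀ e ∈ Pm X σ, (∏ x ∈ univ.filter fun x => q x = e, Am g x (σ x))
      = - sq2 K e := by
    intro e he
    obtain ⟨a, hfe, hea⟩ := fib e he
    rw [hfe, Finset.prod_pair (hσ a).1.symm]
    have h1 : a ≠ σ a := (hσ a).1.symm
    have h1K : (a : K) ≠ ((σ a : {a // a ∈ X}) : K) := fun hc => h1 (Subtype.ext hc)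
    have e1 : Am g a (σ a) = ((a : K) - ((σ a : {a // a ∈ X}) : K))⁻¹ := if_neg h1
    have e2 : Am g (σ a) (σ (σ a)) = (((σ a : {a // a ∈ X}) : K) - (a : K))⁻¹ := by
      rw [(hσ a).2]
      exact if_neg (Ne.symm h1)
    rw [e1, e2, hea]
    have : sq2 K (q a) = (((a : K) - ((σ a : {a // a ∈ X}) : K)) ^ 2)⁻¹ := by
      rw [hq]
      exact Sym2.lift_mk _ _ _
    rw [this]
    rw [← mul_inv]
    rw [show ((a : K) - ((σ a : {a // a ∈ X}) : K)) * (((σ a : {a // a ∈ X}) : K) - (a : K))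
        = -(((a : K) - ((σ a : {a // a ∈ X}) : K)) ^ 2) by ring]
    rw [inv_neg]
  have hneg : ∀ e ∈ Pm X σ, - sq2 K e = (-1 : K) * sq2 K e := fun e _ => by ring
  rw [Finset.prod_congr rfl hval, Finset.prod_congr rfl hneg, Finset.prod_mul_distrib,
    Finset.prod_const, hcard]


lemma invol_sum {h : ℕ} (hX : X.card = 2 * h) :
    ∑ σ ∈ univ.filter (fun σ : Perm {a // a ∈ X} => ∀ x, σ x ≠ x ∧ σ (σ x) = x),
        ∏ x, Am (fun x : {a // a ∈ X} => (x : K)) x (σ x)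
      = ∑ P ∈ X.sym2.powerset.filter (fun P => IsPerfectMatching X P),
          (-1 : K) ^ h * ∏ e ∈ P, sq2 K e := by
  apply Finset.sum_bij (i := fun σ _ => Pm X σ)
  · intro σ hσ
    simp only [mem_filter, mem_univ, true_and] at hσ
    exact Pm_mem X hσ
  · intro σ₁ h₁ σ₂ h₂ heq
    simp only [mem_filter, mem_univ, true_and] at h₁ h₂
    exact Pm_inj X h₁ h₂ heq
  · intro P hP
    obtain ⟨σ, hσ, hPm⟩ := Pm_surj X hP
    exact ⟨σ, by simp only [mem_filter, mem_univ, true_and]; exact hσ, hPm⟩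
  · intro σ hσ
    simp only [mem_filter, mem_univ, true_and] at hσ
    exact value_eq X hX hσ

end Matching
end Stmt10


set_option maxHeartbeats 1000000 in
/-- For `X` of size `2h` in a field of characteristic `≠ 2`, the permanent of the Cauchy
matrix `A_X` (zero diagonal, entries `1/(x-y)`) equals
`(-1)^h ∑_{matchings m of X} ∏_{{x,y} ∈ m} 1/(x-y)²`. -/
theorem stmt10 (K : Type*) [Field K] (h2 : (2 : K) ≠ 0)
    (X : Finset K) (h : ℕ) (hX : X.card = 2 * h) :
    permanent (Matrix.of fun x y : X => if x = y then 0 else ((x : K) - (y : K))⁻¹)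
      = (-1) ^ h *
        ∑ P ∈ X.sym2.powerset.filter (fun P => IsPerfectMatching X P),
          ∏ e ∈ P,
            Sym2.lift
              ⟨fun a b => ((a - b) ^ 2)⁻¹,
                fun a b => by simp only []; rw [show (a - b) ^ 2 = (b - a) ^ 2 by ring]⟩ e := by
  classical
  letI : LinearOrder {a // a ∈ X} :=
    LinearOrder.lift' (fun x => (Fintype.equivFin {a // a ∈ X}) x)
      (fun a b hab => (Fintype.equivFin _).injective hab)
  have hinj : Function.Injective (fun x : {a // a ∈ X} => (x : K)) := Subtype.coe_injective
  have e1 : permanent (Matrix.of fun x y : X => if x = y then 0 else ((x : K) - (y : K))⁻¹)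
      = ∑ σ : Equiv.Perm {a // a ∈ X},
          ∏ x, Stmt10.Am (fun x : {a // a ∈ X} => (x : K)) x (σ x) := by
    rw [permanent]
    apply Finset.sum_congr
    · congr 1 <;> exact Subsingleton.elim _ _
    intro σ _
    apply Finset.prod_congr rfl
    intro x _
    rw [Matrix.of_apply]
    by_cases hxy : x = σ x
    · rw [if_pos hxy, Stmt10.Am, if_pos hxy]
    · rw [if_neg hxy, Stmt10.Am, if_neg hxy]
  rw [e1, Stmt10.sum_perm_eq _ hinj, Stmt10.invol_sum X hX, Finset.mul_sum]
  rfl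
end

section
/- Let X be a finite set of size N of pairwise distinct elements of a field K of characteristic ≠ 2, and suppose α ∈ K (or a quadratic extension, assume α ∈ K) satisfies α^2 = -1. Then for all u ∈ K, per(I_N + u A_X) = det(I_N + α u A_X), where A_X has zero diagonal and entries 1/(x-y) off diagonal. -/
open scoped Classical
set_option linter.unusedSectionVars false
set_option linter.unusedVariables false
set_option linter.unreachableTactic false
set_option linter.unusedTactic false

namespace Stmt11
variable {ι : Type*} [Fintype ι] [DecidableEq ι] {K : Type*} [Field K]
noncomputable def WS (ε : Equiv.Perm ι → K) (w : ι → ι → K) (s : Finset ι) : K :=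
  ∑ σ : Equiv.Perm ι, if ∀ i ∉ s, σ i = i then ε σ * ∏ i ∈ s, w i (σ i) else 0

/-- Weighted sum over permutations with a pending chain from `p` back to `t`. -/
noncomputable def WD (ε : Equiv.Perm ι → K) (w : ι → ι → K) (s : Finset ι) (p t : ι) : K :=
  ∑ σ : Equiv.Perm ι, if σ t = p ∧ ∀ i ∉ insert p (insert t s), σ i = i
    then ε σ * ∏ i ∈ insert p s, w i (σ i) else 0

/-- Chain sums: sum over all orderings of `T` of the weight of the chain
`p → y₁ → ⋯ → y_k → t`, with a factor `c` for each step. -/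
noncomputable def CH (c : K) (w : ι → ι → K) (t : ι) (T : Finset ι) (p : ι) : K :=
  if T = ∅ then c * w p t
  else c * ∑ y ∈ T.attach, w p y.1 * CH c w t (T.erase y.1) y.1
termination_by T.card
decreasing_by exact Finset.card_erase_lt_of_mem y.2

lemma CH_empty (c : K) (w : ι → ι → K) (t p : ι) : CH c w t ∅ p = c * w p t := by
  rw [CH]; simp

lemma CH_nonempty (c : K) (w : ι → ι → K) (t p : ι) {T : Finset ι} (h : T.Nonempty) :
    CH c w t T p = c * ∑ y ∈ T, w p y * CH c w t (T.erase y) y := by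
  rw [CH, if_neg h.ne_empty]
  congr 1
  exact Finset.sum_attach T fun y => w p y * CH c w t (T.erase y) y

lemma WS_empty (ε : Equiv.Perm ι → K) (w : ι → ι → K) (hone : ε 1 = 1) :
    WS ε w ∅ = 1 := by
  rw [WS]
  rw [Fintype.sum_eq_single (1 : Equiv.Perm ι)]
  · simp [hone]
  · intro σ hσ
    rw [if_neg]
    intro h
    exact hσ (Equiv.ext fun i => h i (Finset.notMem_empty i))


lemma E1 (ε : Equiv.Perm ι → K) (w : ι → ι → K) (hw : ∀ i, w i i = 1)
    {s : Finset ι} {t : ι} (hts : t ∈ s) :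
    WS ε w s = WS ε w (s.erase t)
      + ∑ y ∈ s.erase t, w t y * WD ε w ((s.erase t).erase y) y t := by
  have hins : ∀ y ∈ s.erase t, insert y (insert t ((s.erase t).erase y)) = s := by
    intro y hy
    rw [Finset.insert_comm, Finset.insert_erase hy, Finset.insert_erase hts]
  simp only [WS, WD]
  simp_rw [Finset.mul_sum]
  rw [Finset.sum_comm, ← Finset.sum_add_distrib]
  refine Finset.sum_congr rfl fun σ _ => ?_
  by_cases hcond : ∀ i ∉ s, σ i = i
  · by_cases hfix : σ t = t
    · rw [if_pos hcond, if_pos, Finset.sum_eq_zero, add_zero]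
      · rw [← Finset.mul_prod_erase s _ hts, hfix, hw, one_mul]
      · intro y hy
        rw [if_neg, mul_zero]
        rintro ⟨h1, -⟩
        exact (Finset.mem_erase.mp hy).1 (by rw [← h1, hfix])
      · intro i hi
        rcases eq_or_ne i t with rfl | hne
        · exact hfix
        · exact hcond i fun his => hi (Finset.mem_erase.mpr ⟨hne, his⟩)
    · have hy0s : σ t ∈ s.erase t := by
        refine Finset.mem_erase.mpr ⟨hfix, ?_⟩
        by_contra hns
        exact hfix (σ.injective (hcond _ hns))
      rw [if_pos hcond, if_neg, zero_add]
      · rw [Finset.sum_eq_single (σ t)]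
        · have hins2 : insert (σ t) ((s.erase t).erase (σ t)) = s.erase t :=
            Finset.insert_erase hy0s
          rw [if_pos ⟨rfl, (hins _ hy0s).symm ▸ hcond⟩, hins2,
            ← Finset.mul_prod_erase s _ hts]
          ring
        · intro y hy hyne
          rw [if_neg, mul_zero]
          rintro ⟨h1, -⟩
          exact hyne h1.symm
        · intro h
          exact absurd hy0s h
      · intro h
        exact hfix (h t (Finset.notMem_erase t s))
  · rw [if_neg hcond, if_neg, Finset.sum_eq_zero, add_zero]
    · intro y hy
      rw [if_neg, mul_zero]
      rintro ⟨-, h2⟩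
      exact hcond fun i his => h2 i ((hins y hy).symm ▸ his)
    · intro h
      exact hcond fun i his => h i fun hi => his (Finset.mem_of_mem_erase hi)

lemma E2 (ε : Equiv.Perm ι → K) (c : K) (w : ι → ι → K)
    (hmul : ∀ σ τ : Equiv.Perm ι, ε (σ * τ) = ε σ * ε τ)
    (hswap : ∀ a b : ι, a ≠ b → ε (Equiv.swap a b) = c)
    {s : Finset ι} {p t : ι} (hp : p ∉ s) (ht : t ∉ s) (hpt : p ≠ t) :
    WD ε w s p t = c * w p t * WS ε w s
      + c * ∑ y ∈ s, w p y * WD ε w (s.erase y) y t := by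
  have hswap' : ∀ σ : Equiv.Perm ι, ε (σ * Equiv.swap t p) = ε σ * c := fun σ => by
    rw [hmul, hswap t p hpt.symm]
  simp only [WS, WD]
  rw [← Equiv.sum_comp (Equiv.mulRight (Equiv.swap t p))
    (fun σ : Equiv.Perm ι => if σ t = p ∧ ∀ i ∉ insert p (insert t s), σ i = i
      then ε σ * ∏ i ∈ insert p s, w i (σ i) else 0)]
  simp_rw [Finset.mul_sum]
  rw [Finset.sum_comm, ← Finset.sum_add_distrib]
  refine Finset.sum_congr rfl fun σ _ => ?_
  have hmr : ∀ σ : Equiv.Perm ι, (Equiv.mulRight (Equiv.swap t p)) σ = σ * Equiv.swap t p := fun _ => rfl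
  rw [hmr]
  have happ_t : (σ * Equiv.swap t p) t = σ p := by
    simp [Equiv.Perm.mul_apply, Equiv.swap_apply_left]
  have happ_p : (σ * Equiv.swap t p) p = σ t := by
    simp [Equiv.Perm.mul_apply, Equiv.swap_apply_right]
  have happ_other : ∀ i, i ≠ t → i ≠ p → (σ * Equiv.swap t p) i = σ i := by
    intro i h1 h2
    simp [Equiv.Perm.mul_apply, Equiv.swap_apply_of_ne_of_ne h1 h2]
  by_cases hD : ∀ i ∉ insert t s, σ i = i
  · have hσp : σ p = p := hD p (by simp [hpt, hp])
    have hcondL : (σ * Equiv.swap t p) t = p ∧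
        ∀ i ∉ insert p (insert t s), (σ * Equiv.swap t p) i = i := by
      constructor
      · rw [happ_t, hσp]
      · intro i hi
        simp only [Finset.mem_insert, not_or] at hi
        rw [happ_other i hi.2.1 hi.1]
        exact hD i (by simp [hi.2.1, hi.2.2])
    have hprod : ∏ i ∈ insert p s, w i ((σ * Equiv.swap t p) i)
        = w p (σ t) * ∏ i ∈ s, w i (σ i) := by
      rw [Finset.prod_insert hp, happ_p]
      congr 1
      refine Finset.prod_congr rfl fun i hi => ?_
      rw [happ_other i (fun h => ht (h ▸ hi)) (fun h => hp (h ▸ hi))]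
    rw [if_pos hcondL, hswap' σ, hprod]
    by_cases hfix : σ t = t
    · have hws : ∀ i ∉ s, σ i = i := by
        intro i hi
        rcases eq_or_ne i t with rfl | hne
        · exact hfix
        · exact hD i (by simp [hne, hi])
      rw [if_pos hws, Finset.sum_eq_zero, add_zero, hfix]
      · ring
      · intro y hy
        have hc : ¬(σ t = y ∧ ∀ i ∉ insert y (insert t (s.erase y)), σ i = i) := by
          rintro ⟨h1, -⟩
          exact (fun h : y = t => ht (h ▸ hy)) (by rw [← h1, hfix])
        rw [if_neg hc, mul_zero, mul_zero]
    · have hy0 : σ t ∈ s := by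
        have h1 : σ t ≠ t := hfix
        by_contra hns
        have : σ (σ t) = σ t := hD _ (by simp [h1, hns])
        exact hfix (σ.injective this)
      have hws : ¬∀ i ∉ s, σ i = i := fun h => hfix (h t ht)
      rw [if_neg hws, mul_zero, zero_add, Finset.sum_eq_single (σ t)]
      · have hins : insert (σ t) (insert t (s.erase (σ t))) = insert t s := by
          rw [Finset.insert_comm, Finset.insert_erase hy0]
        have hins2 : insert (σ t) (s.erase (σ t)) = s := Finset.insert_erase hy0
        rw [if_pos ⟨rfl, fun i hi => hD i (hins ▸ hi)⟩, hins2]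
        ring
      · intro y hy hyne
        have hc : ¬(σ t = y ∧ ∀ i ∉ insert y (insert t (s.erase y)), σ i = i) := by
          rintro ⟨h1, -⟩
          exact hyne h1.symm
        rw [if_neg hc, mul_zero, mul_zero]
      · intro h
        exact absurd hy0 h
  · have hL : ¬((σ * Equiv.swap t p) t = p ∧
        ∀ i ∉ insert p (insert t s), (σ * Equiv.swap t p) i = i) := by
      rintro ⟨h1, h2⟩
      apply hD
      intro i hi
      simp only [Finset.mem_insert, not_or] at hi
      rcases eq_or_ne i p with rfl | hip
      · rw [← happ_t, h1]
      · rw [← happ_other i hi.1 hip]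
        exact h2 i (by simp [hip, hi.1, hi.2])
    have hws : ¬∀ i ∉ s, σ i = i := by
      intro h
      apply hD
      intro i hi
      simp only [Finset.mem_insert, not_or] at hi
      exact h i hi.2
    rw [if_neg hL, if_neg hws, mul_zero, zero_add, Finset.sum_eq_zero]
    intro y hy
    have hc : ¬(σ t = y ∧ ∀ i ∉ insert y (insert t (s.erase y)), σ i = i) := by
      rintro ⟨-, h2⟩
      apply hD
      intro i hi
      simp only [Finset.mem_insert, not_or] at hi
      refine h2 i ?_
      simp only [Finset.mem_insert, not_or]
      exact ⟨fun h => hi.2 (h ▸ hy), hi.1, fun h => hi.2 (Finset.mem_of_mem_erase h)⟩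
    rw [if_neg hc, mul_zero, mul_zero]


lemma erase_sdiff (s : Finset ι) (y : ι) (T : Finset ι) :
    s.erase y \ T = s \ insert y T := by
  ext i; simp only [Finset.mem_sdiff, Finset.mem_erase, Finset.mem_insert, not_or]; tauto

lemma regroup (s : Finset ι) (f : ι → Finset ι → K) :
    ∑ y ∈ s, ∑ T ∈ (s.erase y).powerset, f y T
      = ∑ U ∈ s.powerset, ∑ y ∈ U, f y (U.erase y) := by
  rw [Finset.sum_sigma', Finset.sum_sigma']
  refine Finset.sum_bij' (fun a _ => (⟨insert a.1 a.2, a.1⟩ : Σ _ : Finset ι, ι))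
    (fun b _ => (⟨b.2, b.1.erase b.2⟩ : Σ _ : ι, Finset ι)) ?_ ?_ ?_ ?_ ?_
  · rintro ⟨y, T⟩ ha
    simp only [Finset.mem_sigma, Finset.mem_powerset] at ha ⊢
    refine ⟨Finset.insert_subset ha.1 (ha.2.trans (Finset.erase_subset _ _)), Finset.mem_insert_self _ _⟩
  · rintro ⟨U, y⟩ hb
    simp only [Finset.mem_sigma, Finset.mem_powerset] at hb ⊢
    exact ⟨hb.1 hb.2, Finset.erase_subset_erase _ hb.1⟩
  · rintro ⟨y, T⟩ ha
    simp only [Finset.mem_sigma, Finset.mem_powerset] at ha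
    have hyT : y ∉ T := fun h => (Finset.mem_erase.mp (ha.2 h)).1 rfl
    simp [Finset.erase_insert hyT]
  · rintro ⟨U, y⟩ hb
    simp only [Finset.mem_sigma, Finset.mem_powerset] at hb
    simp [Finset.insert_erase hb.2]
  · rintro ⟨y, T⟩ ha
    simp only [Finset.mem_sigma, Finset.mem_powerset] at ha
    have hyT : y ∉ T := fun h => (Finset.mem_erase.mp (ha.2 h)).1 rfl
    simp [Finset.erase_insert hyT]

lemma DEC (ε : Equiv.Perm ι → K) (c : K) (w : ι → ι → K)
    (hmul : ∀ σ τ : Equiv.Perm ι, ε (σ * τ) = ε σ * ε τ)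
    (hswap : ∀ a b : ι, a ≠ b → ε (Equiv.swap a b) = c) :
    ∀ (n : ℕ) (s : Finset ι), s.card ≤ n → ∀ p t : ι, p ∉ s → t ∉ s → p ≠ t →
      WD ε w s p t = ∑ T ∈ s.powerset, CH c w t T p * WS ε w (s \ T) := by
  intro n
  induction n with
  | zero =>
    intro s hcard p t hp ht hpt
    have hs : s = ∅ := Finset.card_eq_zero.mp (Nat.le_zero.mp hcard)
    subst hs
    rw [E2 ε c w hmul hswap hp ht hpt]
    simp [CH_empty]
  | succ n ih =>
    intro s hcard p t hp ht hpt
    rw [E2 ε c w hmul hswap hp ht hpt]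
    rw [← Finset.add_sum_erase _ _ (Finset.empty_mem_powerset s), CH_empty,
      Finset.sdiff_empty]
    congr 1
    have hWD : ∀ y ∈ s, WD ε w (s.erase y) y t
        = ∑ T ∈ (s.erase y).powerset, CH c w t T y * WS ε w (s \ insert y T) := by
      intro y hy
      rw [ih (s.erase y) (by
            have := Finset.card_erase_of_mem hy
            omega)
          y t (Finset.notMem_erase y s) (fun h => ht (Finset.mem_of_mem_erase h))
          (fun h => ht (h ▸ hy))]
      exact Finset.sum_congr rfl fun T _ => by rw [erase_sdiff]
    calc c * ∑ y ∈ s, w p y * WD ε w (s.erase y) y t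
        = ∑ y ∈ s, ∑ T ∈ (s.erase y).powerset,
            c * (w p y * (CH c w t T y * WS ε w (s \ insert y T))) := by
          rw [Finset.mul_sum]
          refine Finset.sum_congr rfl fun y hy => ?_
          rw [hWD y hy, Finset.mul_sum, Finset.mul_sum]
      _ = ∑ U ∈ s.powerset, ∑ y ∈ U,
            c * (w p y * (CH c w t (U.erase y) y * WS ε w (s \ insert y (U.erase y)))) :=
          regroup s _
      _ = ∑ U ∈ s.powerset.erase ∅, CH c w t U p * WS ε w (s \ U) := by
          rw [← Finset.add_sum_erase _
              (fun U => ∑ y ∈ U, c * (w p y * (CH c w t (U.erase y) y * WS ε w (s \ insert y (U.erase y)))))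
              (Finset.empty_mem_powerset s), Finset.sum_empty, zero_add]
          refine Finset.sum_congr rfl fun U hU => ?_
          have hUs := Finset.mem_powerset.mp (Finset.mem_of_mem_erase hU)
          have hUne : U.Nonempty := Finset.nonempty_of_ne_empty (Finset.mem_erase.mp hU).1
          rw [CH_nonempty c w t p hUne, mul_assoc, Finset.sum_mul, Finset.mul_sum]
          refine Finset.sum_congr rfl fun y hy => ?_
          rw [Finset.insert_erase hy]
          ring

noncomputable def CYC (c : K) (w : ι → ι → K) (t : ι) (U : Finset ι) : K :=
  ∑ y ∈ U, w t y * CH c w t (U.erase y) y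

lemma sideCalc (ε : Equiv.Perm ι → K) (c : K) (w : ι → ι → K)
    (hmul : ∀ σ τ : Equiv.Perm ι, ε (σ * τ) = ε σ * ε τ)
    (hswap : ∀ a b : ι, a ≠ b → ε (Equiv.swap a b) = c)
    {s : Finset ι} {t : ι} (ht : t ∉ s) :
    ∑ y ∈ s, w t y * WD ε w (s.erase y) y t
      = ∑ U ∈ s.powerset, CYC c w t U * WS ε w (s \ U) := by
  calc ∑ y ∈ s, w t y * WD ε w (s.erase y) y t
      = ∑ y ∈ s, ∑ T ∈ (s.erase y).powerset,
          w t y * (CH c w t T y * WS ε w (s \ insert y T)) := by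
        refine Finset.sum_congr rfl fun y hy => ?_
        rw [DEC ε c w hmul hswap (s.erase y).card (s.erase y) le_rfl y t
            (Finset.notMem_erase y s) (fun h => ht (Finset.mem_of_mem_erase h))
            (fun h => ht (h ▸ hy)), Finset.mul_sum]
        refine Finset.sum_congr rfl fun T _ => by rw [erase_sdiff]
    _ = ∑ U ∈ s.powerset, ∑ y ∈ U,
          w t y * (CH c w t (U.erase y) y * WS ε w (s \ insert y (U.erase y))) :=
        regroup s _
    _ = ∑ U ∈ s.powerset, CYC c w t U * WS ε w (s \ U) := by
        refine Finset.sum_congr rfl fun U hU => ?_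
        rw [CYC, Finset.sum_mul]
        refine Finset.sum_congr rfl fun y hy => ?_
        rw [Finset.insert_erase hy]
        ring

lemma MAIN (ε₁ ε₂ : Equiv.Perm ι → K) (c₁ c₂ : K) (w₁ w₂ : ι → ι → K)
    (hone₁ : ε₁ 1 = 1) (hone₂ : ε₂ 1 = 1)
    (hmul₁ : ∀ σ τ : Equiv.Perm ι, ε₁ (σ * τ) = ε₁ σ * ε₁ τ)
    (hmul₂ : ∀ σ τ : Equiv.Perm ι, ε₂ (σ * τ) = ε₂ σ * ε₂ τ)
    (hswap₁ : ∀ a b : ι, a ≠ b → ε₁ (Equiv.swap a b) = c₁)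
    (hswap₂ : ∀ a b : ι, a ≠ b → ε₂ (Equiv.swap a b) = c₂)
    (hw₁ : ∀ i, w₁ i i = 1) (hw₂ : ∀ i, w₂ i i = 1)
    (hCYC : ∀ (t : ι) (U : Finset ι), t ∉ U → U.Nonempty →
      CYC c₁ w₁ t U = CYC c₂ w₂ t U) :
    ∀ (n : ℕ) (s : Finset ι), s.card ≤ n → WS ε₁ w₁ s = WS ε₂ w₂ s := by
  intro n
  induction n with
  | zero =>
    intro s hcard
    have hs : s = ∅ := Finset.card_eq_zero.mp (Nat.le_zero.mp hcard)
    subst hs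
    rw [WS_empty ε₁ w₁ hone₁, WS_empty ε₂ w₂ hone₂]
  | succ n ih =>
    intro s hcard
    rcases s.eq_empty_or_nonempty with rfl | ⟨t, ht⟩
    · rw [WS_empty ε₁ w₁ hone₁, WS_empty ε₂ w₂ hone₂]
    · have hcard' : (s.erase t).card ≤ n := by
        have := Finset.card_erase_of_mem ht
        omega
      rw [E1 ε₁ w₁ hw₁ ht, E1 ε₂ w₂ hw₂ ht,
        sideCalc ε₁ c₁ w₁ hmul₁ hswap₁ (Finset.notMem_erase t s),
        sideCalc ε₂ c₂ w₂ hmul₂ hswap₂ (Finset.notMem_erase t s),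
        ih (s.erase t) hcard']
      congr 1
      refine Finset.sum_congr rfl fun U hU => ?_
      have hUs := Finset.mem_powerset.mp hU
      have hWSeq : WS ε₁ w₁ (s.erase t \ U) = WS ε₂ w₂ (s.erase t \ U) := by
        refine ih _ (le_trans (Finset.card_le_card (Finset.sdiff_subset)) hcard')
      rcases U.eq_empty_or_nonempty with rfl | hUne
      · simp [CYC]
      · rw [hCYC t U (fun h => Finset.notMem_erase t s (hUs h)) hUne, hWSeq]

lemma CH_congr (c : K) (w w' : ι → ι → K) (h : ∀ i j, i ≠ j → w i j = w' i j) (t : ι) :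
    ∀ (n : ℕ) (T : Finset ι), T.card ≤ n → ∀ p : ι, p ∉ T → t ∉ T → p ≠ t →
      CH c w t T p = CH c w' t T p := by
  intro n
  induction n with
  | zero =>
    intro T hT p hp ht hpt
    rw [Finset.card_eq_zero.mp (Nat.le_zero.mp hT), CH_empty, CH_empty, h p t hpt]
  | succ n ih =>
    intro T hT p hp ht hpt
    rcases T.eq_empty_or_nonempty with rfl | hTne
    · rw [CH_empty, CH_empty, h p t hpt]
    · rw [CH_nonempty c w t p hTne, CH_nonempty c w' t p hTne]
      congr 1
      refine Finset.sum_congr rfl fun y hy => ?_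
      rw [h p y (fun he => hp (he ▸ hy)),
        ih (T.erase y) (by have := Finset.card_erase_of_mem hy; omega) y
          (Finset.notMem_erase y T) (fun hx => ht (Finset.mem_of_mem_erase hx))
          (fun he => ht (he ▸ hy))]

lemma CH_smul (c d : K) (w : ι → ι → K) (t : ι) :
    ∀ (n : ℕ) (T : Finset ι), T.card ≤ n → ∀ p : ι,
      CH c (fun i j => d * w i j) t T p = (c * d) ^ (T.card + 1) * CH 1 w t T p := by
  intro n
  induction n with
  | zero =>
    intro T hT p
    rw [Finset.card_eq_zero.mp (Nat.le_zero.mp hT), CH_empty, CH_empty]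
    simp; ring
  | succ n ih =>
    intro T hT p
    rcases T.eq_empty_or_nonempty with rfl | hTne
    · rw [CH_empty, CH_empty]; simp; ring
    · rw [CH_nonempty _ _ t p hTne, CH_nonempty 1 w t p hTne]
      rw [Finset.mul_sum, Finset.mul_sum, Finset.mul_sum]
      refine Finset.sum_congr rfl fun y hy => ?_
      rw [ih (T.erase y) (by have := Finset.card_erase_of_mem hy; omega) y]
      have hc : (T.erase y).card + 1 = T.card := by
        have := Finset.card_erase_of_mem hy
        have : 1 ≤ T.card := Finset.card_pos.mpr hTne
        omega
      rw [← hc, pow_succ]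
      ring

open Polynomial

lemma ID1 (v : ι → K) (hv : Function.Injective v) (T : Finset ι) (hT : T.Nonempty)
    (b x : K) :
    ∑ y ∈ T, (v y - b) ^ (T.card - 1) * ∏ z ∈ T.erase y, ((v y - v z)⁻¹ * (x - v z))
      = (x - b) ^ (T.card - 1) := by
  have hdeg : ((X - C b) ^ (T.card - 1) : K[X]).degree < T.card := by
    refine lt_of_le_of_lt (degree_pow_le _ _) ?_
    rw [degree_X_sub_C]
    have : 1 ≤ T.card := Finset.card_pos.mpr hT
    simp only [nsmul_eq_mul, mul_one]
    exact_mod_cast Nat.lt_of_lt_of_le (Nat.sub_lt this one_pos) le_rfl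
  have hint := Lagrange.eq_interpolate (f := (X - C b) ^ (T.card - 1))
    (Set.injOn_of_injective hv) hdeg
  have := congrArg (Polynomial.eval x) hint
  rw [Lagrange.interpolate_apply, eval_finset_sum] at this
  simp only [eval_pow, eval_sub, eval_X, eval_C, eval_mul] at this
  rw [this]
  refine Finset.sum_congr rfl fun y hy => ?_
  congr 1
  rw [Lagrange.basis, eval_prod]
  refine Finset.prod_congr rfl fun z hz => ?_
  rw [Lagrange.basisDivisor]
  simp

lemma ID2 (v : ι → K) (hv : Function.Injective v) (U : Finset ι) (hU : 2 ≤ U.card)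
    (b : K) :
    ∑ y ∈ U, (v y - b) ^ (U.card - 2) * ∏ z ∈ U.erase y, (v y - v z)⁻¹ = 0 := by
  have hdeg : ((X - C b) ^ (U.card - 2) : K[X]).degree < U.card := by
    refine lt_of_le_of_lt (degree_pow_le _ _) ?_
    rw [degree_X_sub_C]
    simp only [nsmul_eq_mul, mul_one]
    exact_mod_cast Nat.lt_of_lt_of_le (by omega : U.card - 2 < U.card) le_rfl
  have hint := Lagrange.eq_interpolate (f := (X - C b) ^ (U.card - 2))
    (Set.injOn_of_injective hv) hdeg
  have hcoeff := congrArg (fun q : K[X] => q.coeff (U.card - 1)) hint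
  simp only [Lagrange.interpolate_apply, finset_sum_coeff, coeff_C_mul] at hcoeff
  have hL : ((X - C b) ^ (U.card - 2) : K[X]).coeff (U.card - 1) = 0 := by
    refine coeff_eq_zero_of_degree_lt (lt_of_le_of_lt (degree_pow_le _ _) ?_)
    rw [degree_X_sub_C]
    simp only [nsmul_eq_mul, mul_one]
    exact_mod_cast (by omega : U.card - 2 < U.card - 1)
  rw [hL] at hcoeff
  refine Eq.trans (Finset.sum_congr rfl fun y hy => ?_) hcoeff.symm
  have hbasis : Lagrange.basis U v y
      = C (∏ z ∈ U.erase y, (v y - v z)⁻¹) * ∏ z ∈ U.erase y, (X - C (v z)) := by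
    rw [Lagrange.basis, map_prod, ← Finset.prod_mul_distrib]
    exact Finset.prod_congr rfl fun z hz => rfl
  have hm : (∏ z ∈ U.erase y, (X - C (v z)) : K[X]).Monic :=
    monic_prod_of_monic _ _ fun z _ => monic_X_sub_C _
  have hnd : (∏ z ∈ U.erase y, (X - C (v z)) : K[X]).natDegree = U.card - 1 := by
    rw [natDegree_prod_of_monic _ _ fun z _ => monic_X_sub_C _]
    simp [Finset.card_erase_of_mem hy]
  have hco : (∏ z ∈ U.erase y, (X - C (v z)) : K[X]).coeff (U.card - 1) = 1 := by
    rw [← hnd]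
    exact hm.coeff_natDegree
  rw [hbasis, coeff_C_mul, hco, mul_one, eval_pow, eval_sub, eval_X, eval_C]


lemma CH_form (v : ι → K) (hv : Function.Injective v) :
    ∀ (n : ℕ) (T : Finset ι), T.card ≤ n → ∀ p t : ι, p ∉ T → t ∉ T → p ≠ t →
      CH 1 (fun i j => (v i - v j)⁻¹) t T p
        = (v p - v t) ^ T.card * (v p - v t)⁻¹
            * ∏ y ∈ T, ((v p - v y)⁻¹ * (v y - v t)⁻¹) := by
  intro n
  induction n with
  | zero =>
    intro T hT p t hp ht hpt
    rw [Finset.card_eq_zero.mp (Nat.le_zero.mp hT), CH_empty]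
    simp
  | succ n ih =>
    intro T hT p t hp ht hpt
    rcases T.eq_empty_or_nonempty with rfl | hTne
    · rw [CH_empty]; simp
    · have hpt' : v p - v t ≠ 0 := sub_ne_zero.mpr fun he => hpt (hv he)
      obtain ⟨m, hm⟩ : ∃ m, T.card = m + 1 :=
        ⟨T.card - 1, by have := Finset.card_pos.mpr hTne; omega⟩
      -- RHS transformation
      have hRHS : (v p - v t) ^ T.card * (v p - v t)⁻¹
            * ∏ y ∈ T, ((v p - v y)⁻¹ * (v y - v t)⁻¹)
          = (∑ y ∈ T, (v y - v t) ^ m * ∏ z ∈ T.erase y, ((v y - v z)⁻¹ * (v p - v z)))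
            * ∏ y ∈ T, ((v p - v y)⁻¹ * (v y - v t)⁻¹) := by
        rw [hm, pow_succ, mul_assoc ((v p - v t) ^ m), mul_inv_cancel₀ hpt', mul_one]
        have := ID1 v hv T hTne (v t) (v p)
        rw [hm] at this
        simp only [Nat.add_sub_cancel] at this
        rw [this]
      rw [hRHS, Finset.sum_mul, CH_nonempty 1 _ t p hTne, one_mul]
      refine Finset.sum_congr rfl fun y hy => ?_
      have hyT : y ∉ T.erase y := Finset.notMem_erase y T
      have htT : t ∉ T.erase y := fun hx => ht (Finset.mem_of_mem_erase hx)
      have hyt : y ≠ t := fun he => ht (he ▸ hy)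
      have hyt' : v y - v t ≠ 0 := sub_ne_zero.mpr fun he => hyt (hv he)
      rw [ih (T.erase y) (by have := Finset.card_erase_of_mem hy; omega) y t hyT htT hyt]
      have hce : (T.erase y).card = m := by
        have := Finset.card_erase_of_mem hy; omega
      rw [hce]
      have h1 : ∏ w ∈ T, ((v p - v w)⁻¹ * (v w - v t)⁻¹)
          = ((v p - v y)⁻¹ * (v y - v t)⁻¹)
            * ∏ w ∈ T.erase y, ((v p - v w)⁻¹ * (v w - v t)⁻¹) :=
        (Finset.mul_prod_erase T _ hy).symm
      have h2 : (∏ z ∈ T.erase y, ((v y - v z)⁻¹ * (v p - v z)))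
            * ∏ z ∈ T.erase y, ((v p - v z)⁻¹ * (v z - v t)⁻¹)
          = ∏ z ∈ T.erase y, ((v y - v z)⁻¹ * (v z - v t)⁻¹) := by
        rw [← Finset.prod_mul_distrib]
        refine Finset.prod_congr rfl fun z hz => ?_
        have hpz : v p - v z ≠ 0 :=
          sub_ne_zero.mpr fun he => hp (hv he ▸ Finset.mem_of_mem_erase hz)
        calc (v y - v z)⁻¹ * (v p - v z) * ((v p - v z)⁻¹ * (v z - v t)⁻¹)
            = (v y - v z)⁻¹ * (v z - v t)⁻¹ * ((v p - v z) * (v p - v z)⁻¹) := by ring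
          _ = (v y - v z)⁻¹ * (v z - v t)⁻¹ := by rw [mul_inv_cancel₀ hpz, mul_one]
      symm
      calc ((v y - v t) ^ m * ∏ z ∈ T.erase y, ((v y - v z)⁻¹ * (v p - v z)))
            * ∏ w ∈ T, ((v p - v w)⁻¹ * (v w - v t)⁻¹)
          = (v p - v y)⁻¹ * (v y - v t)⁻¹
              * ((v y - v t) ^ m
                * ((∏ z ∈ T.erase y, ((v y - v z)⁻¹ * (v p - v z)))
                  * ∏ z ∈ T.erase y, ((v p - v z)⁻¹ * (v z - v t)⁻¹))) := by
            rw [h1]; ring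
        _ = (v p - v y)⁻¹ * ((v y - v t) ^ m * (v y - v t)⁻¹
              * ∏ z ∈ T.erase y, ((v y - v z)⁻¹ * (v z - v t)⁻¹)) := by
            rw [h2]; ring

lemma KEY (v : ι → K) (hv : Function.Injective v) (t : ι) (U : Finset ι)
    (hU : 2 ≤ U.card) (ht : t ∉ U) :
    ∑ y ∈ U, (v t - v y)⁻¹ * CH 1 (fun i j => (v i - v j)⁻¹) t (U.erase y) y = 0 := by
  have hstep : ∀ y ∈ U, (v t - v y)⁻¹ * CH 1 (fun i j => (v i - v j)⁻¹) t (U.erase y) y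
      = (-(∏ z ∈ U, (v z - v t)⁻¹))
        * ((v y - v t) ^ (U.card - 2) * ∏ z ∈ U.erase y, (v y - v z)⁻¹) := by
    intro y hy
    have hyt : y ≠ t := fun he => ht (he ▸ hy)
    have hyt' : v y - v t ≠ 0 := sub_ne_zero.mpr fun he => hyt (hv he)
    rw [CH_form v hv (U.erase y).card (U.erase y) le_rfl y t (Finset.notMem_erase y U)
      (fun hx => ht (Finset.mem_of_mem_erase hx)) hyt]
    have hce : (U.erase y).card = (U.card - 2) + 1 := by
      have := Finset.card_erase_of_mem hy; omega
    have hty : (v t - v y)⁻¹ = -(v y - v t)⁻¹ := by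
      rw [show v t - v y = -(v y - v t) by ring, inv_neg]
    have hsplit : ∏ z ∈ U.erase y, ((v y - v z)⁻¹ * (v z - v t)⁻¹)
        = (∏ z ∈ U.erase y, (v y - v z)⁻¹) * ∏ z ∈ U.erase y, (v z - v t)⁻¹ :=
      Finset.prod_mul_distrib
    have hU' : ∏ z ∈ U, (v z - v t)⁻¹
        = (v y - v t)⁻¹ * ∏ z ∈ U.erase y, (v z - v t)⁻¹ :=
      (Finset.mul_prod_erase U _ hy).symm
    have hery : ∏ z ∈ U.erase y, (v z - v t)⁻¹
        = (v y - v t) * ∏ z ∈ U, (v z - v t)⁻¹ := by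
      rw [hU', ← mul_assoc, mul_inv_cancel₀ hyt', one_mul]
    rw [hty, hce, hsplit, hery]
    rw [pow_succ]
    have hc1 : (v y - v t) * (v y - v t)⁻¹ = 1 := mul_inv_cancel₀ hyt'
    linear_combination (-((∏ z ∈ U, (v z - v t)⁻¹)
      * ((v y - v t) ^ (U.card - 2) * ∏ z ∈ U.erase y, (v y - v z)⁻¹))
      * ((v y - v t) * (v y - v t)⁻¹ + 1)) * hc1
  rw [Finset.sum_congr rfl hstep, ← Finset.mul_sum,
    ID2 v hv U hU (v t), mul_zero]



section Inst
variable {K : Type*} [Field K] {ι : Type*} [Fintype ι] [DecidableEq ι]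
open Polynomial

lemma CYC_eq (v : ι → K) (hv : Function.Injective v) (u α : K) (hα : α ^ 2 = -1)
    (t : ι) (U : Finset ι) (ht : t ∉ U) (hUne : U.Nonempty) :
    CYC (1 : K) (fun i j => if i = j then 1 else u * (v i - v j)⁻¹) t U
      = CYC (-1 : K) (fun i j => if i = j then 1 else (α * u) * (v i - v j)⁻¹) t U := by
  set a0 : ι → ι → K := fun i j => (v i - v j)⁻¹ with ha0
  have hcongr1 : ∀ i j : ι, i ≠ j →
      (if i = j then (1:K) else u * (v i - v j)⁻¹) = u * a0 i j := by
    intro i j hij; rw [if_neg hij]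
  have hcongr2 : ∀ i j : ι, i ≠ j →
      (if i = j then (1:K) else (α * u) * (v i - v j)⁻¹) = (α * u) * a0 i j := by
    intro i j hij; rw [if_neg hij]
  have hterm : ∀ y ∈ U, y ≠ t ∧ ((U.erase y).card + 1 = U.card) := by
    intro y hy
    exact ⟨fun he => ht (he ▸ hy), by
      have := Finset.card_erase_of_mem hy
      have := Finset.card_pos.mpr hUne
      omega⟩
  have hch : ∀ y ∈ U, ∀ (c d : K) (w : ι → ι → K),
      (∀ i j : ι, i ≠ j → w i j = d * a0 i j) →
      CH c w t (U.erase y) y = (c * d) ^ U.card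
        * CH 1 a0 t (U.erase y) y := by
    intro y hy c d w hw
    have h1 := CH_congr c w (fun i j => d * a0 i j) hw t (U.erase y).card (U.erase y)
      le_rfl y (Finset.notMem_erase y U) (fun hx => ht (Finset.mem_of_mem_erase hx))
      (hterm y hy).1
    have h2 := CH_smul c d a0 t (U.erase y).card (U.erase y) le_rfl y
    rw [h1, h2, (hterm y hy).2]
  rcases eq_or_lt_of_le (show 1 ≤ U.card from Finset.card_pos.mpr hUne) with h1 | h2
  · -- |U| = 1
    obtain ⟨y0, hy0⟩ := Finset.card_eq_one.mp h1.symm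
    subst hy0
    have hty0 : t ≠ y0 := fun he => ht (he ▸ Finset.mem_singleton_self y0)
    rw [CYC, CYC, Finset.sum_singleton, Finset.sum_singleton, Finset.erase_singleton,
      CH_empty, CH_empty, if_neg hty0, if_neg hty0, if_neg hty0.symm, if_neg hty0.symm]
    linear_combination (u * u * (v t - v y0)⁻¹ * (v y0 - v t)⁻¹) * hα
  · -- |U| ≥ 2
    have hU2 : 2 ≤ U.card := h2
    have hkey := KEY v hv t U hU2 ht
    have side1 : CYC (1 : K) (fun i j => if i = j then 1 else u * (v i - v j)⁻¹) t U
        = (u * u ^ U.card)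
          * ∑ y ∈ U, a0 t y * CH 1 a0 t (U.erase y) y := by
      rw [CYC, Finset.mul_sum]
      refine Finset.sum_congr rfl fun y hy => ?_
      rw [hcongr1 t y (hterm y hy).1.symm, hch y hy 1 u _ hcongr1, one_mul]
      ring
    have side2 : CYC (-1 : K) (fun i j => if i = j then 1 else (α * u) * (v i - v j)⁻¹) t U
        = ((α * u) * (-1 * (α * u)) ^ U.card)
          * ∑ y ∈ U, a0 t y * CH 1 a0 t (U.erase y) y := by
      rw [CYC, Finset.mul_sum]
      refine Finset.sum_congr rfl fun y hy => ?_
      rw [hcongr2 t y (hterm y hy).1.symm, hch y hy (-1) (α * u) _ hcongr2]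
      ring
    rw [side1, side2, hkey, mul_zero, mul_zero]

end Inst
end Stmt11


set_option maxHeartbeats 1000000 in
open Stmt11 in
/-- If `α² = -1` in a field `K` of characteristic `≠ 2` and `X ⊆ K` is finite, then for all
`u`, `per(I + u A_X) = det(I + α u A_X)` where `A_X` is the Cauchy matrix of `X`. -/
theorem stmt11 (K : Type*) [Field K] (h2 : (2 : K) ≠ 0)
    (X : Finset K) (α : K) (hα : α ^ 2 = -1) (u : K) :
    permanent
        (1 + u • Matrix.of fun x y : X => if x = y then 0 else ((x : K) - (y : K))⁻¹)
      = Matrix.det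
          (1 + (α * u) • Matrix.of fun x y : X => if x = y then 0 else ((x : K) - (y : K))⁻¹) := by
  set A : Matrix X X K := Matrix.of fun x y : X => if x = y then 0 else ((x : K) - (y : K))⁻¹
    with hA
  set v : X → K := fun x => (x : K) with hv'
  have hv : Function.Injective v := Subtype.coe_injective
  set w1 : X → X → K := fun i j => if i = j then 1 else u * (v i - v j)⁻¹ with hw1'
  set w2 : X → X → K := fun i j => if i = j then 1 else (α * u) * (v i - v j)⁻¹ with hw2'
  have hM1 : ∀ i j, (1 + u • A) i j = w1 i j := by
    intro i j
    by_cases h : i = j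
    · subst h
      simp [hA, hw1', Matrix.add_apply, Matrix.one_apply_eq, Matrix.smul_apply]
    · simp [hA, hw1', Matrix.add_apply, Matrix.one_apply_ne h, Matrix.smul_apply, h, hv',
        smul_eq_mul]
  have hM2 : ∀ i j, (1 + (α * u) • A) i j = w2 i j := by
    intro i j
    by_cases h : i = j
    · subst h
      simp [hA, hw2', Matrix.add_apply, Matrix.one_apply_eq, Matrix.smul_apply]
    · simp [hA, hw2', Matrix.add_apply, Matrix.one_apply_ne h, Matrix.smul_apply, h, hv',
        smul_eq_mul]
  have hper : permanent (1 + u • A) = WS (fun _ => (1 : K)) w1 Finset.univ := by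
    rw [permanent, WS]
    refine Finset.sum_congr ?_ fun σ _ => ?_
    · congr 1
      all_goals exact Subsingleton.elim _ _
    rw [if_pos (fun i hi => absurd (Finset.mem_univ i) hi), one_mul]
    exact Finset.prod_congr rfl fun i _ => hM1 i (σ i)
  have hdet : Matrix.det (1 + (α * u) • A)
      = WS (fun σ : Equiv.Perm X => ((Equiv.Perm.sign σ : ℤ) : K)) w2 Finset.univ := by
    rw [← Matrix.det_transpose, Matrix.det_apply', WS]
    refine Finset.sum_congr ?_ fun σ _ => ?_
    · congr 1
      all_goals exact Subsingleton.elim _ _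
    rw [if_pos (fun i hi => absurd (Finset.mem_univ i) hi)]
    congr 1
    refine Finset.prod_congr rfl fun i _ => ?_
    rw [Matrix.transpose_apply]
    exact hM2 i (σ i)
  rw [hper, hdet]
  refine MAIN (fun _ => (1 : K)) (fun σ : Equiv.Perm X => ((Equiv.Perm.sign σ : ℤ) : K))
    1 (-1) w1 w2 rfl (by simp) (fun _ _ => (one_mul (1 : K)).symm)
    (fun σ τ => by
      show ((Equiv.Perm.sign (σ * τ) : ℤ) : K) = _
      rw [Equiv.Perm.sign_mul]; push_cast; ring)
    (fun a b h => rfl)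
    (fun a b h => by
      show ((Equiv.Perm.sign (Equiv.swap a b) : ℤ) : K) = -1
      rw [Equiv.Perm.sign_swap h]; simp)
    (fun i => if_pos rfl) (fun i => if_pos rfl)
    (fun t U htU hUne => CYC_eq v hv u α hα t U htU hUne)
    Finset.univ.card Finset.univ le_rfl
end
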